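/- arXiv:1408.1522 — 9 statements merged into one kernel-verified Lean document; each statement's English description precedes it below -/
import Mathlib

section
/- For nonzero distinct integers m, n, if (t,x,y) satisfies y²t = x(x+mt)(x+nt), then the point (X₀, X₁, X₂, X₃) with X₀ = −(x+mt)(y² − m(x+nt)²), X₁ = 2y(x+nt)(x+mt), X₂ = −(x+mt)(y² + m(x+nt)²), X₃ = −(x+nt)(y² + n(x+mt)²) satisfies X₀² + mX₁² = X₂² and X₀² + nX₁² = X₃². -/
/-- The map `ψ` sends points of the projective cubic `Y²T = X(X + mT)(X + nT)` to points
of the intersection of the quadrics `X₀² + mX₁² = X₂²` and `X₀² + nX₁² = X₃²`. -/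
theorem psi_maps_cubic_to_quadric_intersection (m n : ℤ) (hm : m ≠ 0) (hn : n ≠ 0)
    (hmn : m ≠ n) (t x y : ℚ)
    (h : y ^ 2 * t = x * (x + (m : ℚ) * t) * (x + (n : ℚ) * t)) :
    let X₀ : ℚ := -(x + (m : ℚ) * t) * (y ^ 2 - (m : ℚ) * (x + (n : ℚ) * t) ^ 2)
    let X₁ : ℚ := 2 * y * (x + (n : ℚ) * t) * (x + (m : ℚ) * t)
    let X₂ : ℚ := -(x + (m : ℚ) * t) * (y ^ 2 + (m : ℚ) * (x + (n : ℚ) * t) ^ 2)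
    let X₃ : ℚ := -(x + (n : ℚ) * t) * (y ^ 2 + (n : ℚ) * (x + (m : ℚ) * t) ^ 2)
    X₀ ^ 2 + (m : ℚ) * X₁ ^ 2 = X₂ ^ 2 ∧ X₀ ^ 2 + (n : ℚ) * X₁ ^ 2 = X₃ ^ 2 := by
  refine ⟨by ring, ?_⟩
  linear_combination (((m : ℚ) - n) * (2 * x + ((m : ℚ) + n) * t) * y ^ 2 -
    (x + (m : ℚ) * t) * (x + (n : ℚ) * t) * ((m : ℚ) - n) *
      (((m : ℚ) + n) * x + 2 * (m : ℚ) * n * t)) * h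
end

section
/- For nonzero distinct integers m, n, the quadratic forms X²+mY² and X²+nY² are concordant if and only if the elliptic curve y² = x(x+m)(x+n) possesses a rational point of (finite or infinite) order greater than two. -/
/-- The elliptic curve `y² = x(x + m)(x + n)` as an affine Weierstrass curve over `ℚ`. -/
def E (m n : ℤ) : WeierstrassCurve.Affine ℚ where
  a₁ := 0
  a₂ := (m : ℚ) + n
  a₃ := 0
  a₄ := (m : ℚ) * n
  a₆ := 0

lemma E_a₁ (m n : ℤ) : (E m n).a₁ = 0 := rfl
lemma E_a₂ (m n : ℤ) : (E m n).a₂ = (m : ℚ) + n := rfl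
lemma E_a₃ (m n : ℤ) : (E m n).a₃ = 0 := rfl
lemma E_a₄ (m n : ℤ) : (E m n).a₄ = (m : ℚ) * n := rfl
lemma E_a₆ (m n : ℤ) : (E m n).a₆ = 0 := rfl

lemma E_negY (m n : ℤ) (x y : ℚ) : (E m n).negY x y = -y := by
  rw [WeierstrassCurve.Affine.negY, E_a₁, E_a₃]; ring

lemma E_equation_iff (m n : ℤ) (x y : ℚ) :
    (E m n).Equation x y ↔ y ^ 2 = x * (x + m) * (x + n) := by
  rw [WeierstrassCurve.Affine.equation_iff, E_a₁, E_a₂, E_a₃, E_a₄, E_a₆]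
  constructor <;> intro h <;> linear_combination h

open WeierstrassCurve.Affine in
/-- From an affine point with `y ≠ 0` on `y² = x(x+m)(x+n)`, get a point of order `> 2`. -/
lemma point_of_xy (m n : ℤ) (x y : ℚ) (hy : y ≠ 0)
    (heq : y ^ 2 = x * (x + m) * (x + n)) :
    ∃ P : (E m n).Point, P ≠ 0 ∧ 2 • P ≠ 0 := by
  have hy' : y ≠ (E m n).negY x y := by
    rw [E_negY]
    intro h; apply hy; linarith
  have hns : (E m n).Nonsingular x y := by
    rw [nonsingular_iff]
    refine ⟨(E_equation_iff m n x y).mpr heq, Or.inr ?_⟩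
    rw [E_a₁, E_a₃]
    rw [E_negY] at hy'
    intro h
    exact hy' (by linarith)
  refine ⟨.some _ _ hns, Point.some_ne_zero _, ?_⟩
  rw [two_smul, Point.add_self_of_Y_ne hy']
  exact Point.some_ne_zero _

/-- The forms `X² + mY²` and `X² + nY²` are concordant iff `E(m,n)` has a rational point
of (finite or infinite) order greater than two. -/
theorem concordant_iff_exists_point_of_order_gt_two (m n : ℤ) (hm : m ≠ 0) (hn : n ≠ 0)
    (hmn : m ≠ n) :
    (∃ X Y Z W : ℤ, Y ≠ 0 ∧ X ^ 2 + m * Y ^ 2 = Z ^ 2 ∧ X ^ 2 + n * Y ^ 2 = W ^ 2) ↔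
      ∃ P : (E m n).Point, P ≠ 0 ∧ 2 • P ≠ 0 := by
  have hmQ : (m : ℚ) ≠ 0 := Int.cast_ne_zero.mpr hm
  have hnQ : (n : ℚ) ≠ 0 := Int.cast_ne_zero.mpr hn
  have hmnQ : (m : ℚ) ≠ (n : ℚ) := fun h => hmn (by exact_mod_cast h)
  constructor
  · rintro ⟨X, Y, Z, W, hY, h1, h2⟩
    have hYQ : (Y : ℚ) ≠ 0 := Int.cast_ne_zero.mpr hY
    have hq1 : (X : ℚ) ^ 2 + m * (Y : ℚ) ^ 2 = (Z : ℚ) ^ 2 := by exact_mod_cast h1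
    have hq2 : (X : ℚ) ^ 2 + n * (Y : ℚ) ^ 2 = (W : ℚ) ^ 2 := by exact_mod_cast h2
    by_cases hX : (X : ℚ) = 0
    · -- `m` and `n` are both rational squares
      have ha : ((Z : ℚ) / Y) ^ 2 = m := by
        field_simp
        linear_combination -hq1 + (X : ℚ) * hX
      have hb : ((W : ℚ) / Y) ^ 2 = n := by
        field_simp
        linear_combination -hq2 + (X : ℚ) * hX
      set a : ℚ := (Z : ℚ) / Y
      set b : ℚ := (W : ℚ) / Y
      have haz : a ≠ 0 := fun h => hmQ (by rw [← ha, h]; ring)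
      have hbz : b ≠ 0 := fun h => hnQ (by rw [← hb, h]; ring)
      have hab : a + b ≠ 0 := by
        intro h
        apply hmnQ
        have hb' : b = -a := by linarith
        rw [← ha, ← hb, hb']; ring
      exact point_of_xy m n (a * b) (a * b * (a + b))
        (mul_ne_zero (mul_ne_zero haz hbz) hab) (by rw [← ha, ← hb]; ring)
    · by_cases hZ : (Z : ℚ) = 0
      · -- `m = -c²`, `n = e² - c²`
        have hc : (m : ℚ) = -((X : ℚ) / Y) ^ 2 := by
          field_simp
          linear_combination hq1 + (Z : ℚ) * hZ
        have he : (n : ℚ) = ((W : ℚ) / Y) ^ 2 - ((X : ℚ) / Y) ^ 2 := by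
          field_simp
          linear_combination hq2
        set c : ℚ := (X : ℚ) / Y
        set e : ℚ := (W : ℚ) / Y
        have hcz : c ≠ 0 := div_ne_zero hX hYQ
        have hez : e ≠ 0 := fun h => hmnQ (by rw [hc, he, h]; ring)
        have hce : c + e ≠ 0 := by
          intro h
          apply hnQ
          have he' : e = -c := by linarith
          rw [he, he']; ring
        exact point_of_xy m n (c * (c + e)) (c * e * (c + e))
          (mul_ne_zero (mul_ne_zero hcz hez) hce) (by rw [hc, he]; ring)
      · by_cases hW : (W : ℚ) = 0
        · -- `n = -c²`, `m = e² - c²`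
          have hc : (n : ℚ) = -((X : ℚ) / Y) ^ 2 := by
            field_simp
            linear_combination hq2 + (W : ℚ) * hW
          have he : (m : ℚ) = ((Z : ℚ) / Y) ^ 2 - ((X : ℚ) / Y) ^ 2 := by
            field_simp
            linear_combination hq1
          set c : ℚ := (X : ℚ) / Y
          set e : ℚ := (Z : ℚ) / Y
          have hcz : c ≠ 0 := div_ne_zero hX hYQ
          have hez : e ≠ 0 := fun h => hmnQ (by rw [hc, he, h]; ring)
          have hce : c + e ≠ 0 := by
            intro h
            apply hmQ
            have he' : e = -c := by linarith
            rw [he, he']; ring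
          exact point_of_xy m n (c * (c + e)) (c * e * (c + e))
            (mul_ne_zero (mul_ne_zero hcz hez) hce) (by rw [hc, he]; ring)
        · -- generic case
          have hZQ : (Z : ℚ) ≠ 0 := hZ
          have hWQ : (W : ℚ) ≠ 0 := hW
          refine point_of_xy m n ((X : ℚ) ^ 2 / (Y : ℚ) ^ 2)
            ((X : ℚ) * Z * W / (Y : ℚ) ^ 3)
            (div_ne_zero (mul_ne_zero (mul_ne_zero hX hZQ) hWQ) (pow_ne_zero 3 hYQ)) ?_
          field_simp
          linear_combination (-(Z : ℚ) ^ 2) * hq2 +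
            (-((X : ℚ) ^ 2 + n * (Y : ℚ) ^ 2)) * hq1
  · rintro ⟨P, hP0, hP2⟩
    cases P with
    | zero => exact absurd rfl hP0
    | @some x y h =>
      have hy' : y ≠ (E m n).negY x y := by
        intro h'
        exact hP2 (by rw [two_smul]; exact WeierstrassCurve.Affine.Point.add_self_of_Y_eq h')
      have hy : y ≠ 0 := by
        intro h0
        apply hy'
        rw [E_negY, h0]; ring
      have heq : y ^ 2 = x * (x + m) * (x + n) := (E_equation_iff m n x y).mp h.1
      have hdx : ((x.den : ℚ)) ≠ 0 := Nat.cast_ne_zero.mpr x.den_nz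
      have hdy : ((y.den : ℚ)) ≠ 0 := Nat.cast_ne_zero.mpr y.den_nz
      have hxnum : (x.num : ℚ) = x * x.den := (div_eq_iff hdx).mp (Rat.num_div_den x)
      have hynum : (y.num : ℚ) = y * y.den := (div_eq_iff hdy).mp (Rat.num_div_den y)
      refine ⟨(x.num * y.den) ^ 2 - m * n * ((x.den : ℤ) * y.den) ^ 2,
        2 * ((x.den : ℤ) ^ 2 * y.den * y.num),
        (x.num * y.den) ^ 2 + 2 * m * ((x.den : ℤ) * y.den) * (x.num * y.den)
          + m * n * ((x.den : ℤ) * y.den) ^ 2,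
        (x.num * y.den) ^ 2 + 2 * n * ((x.den : ℤ) * y.den) * (x.num * y.den)
          + m * n * ((x.den : ℤ) * y.den) ^ 2, ?_, ?_, ?_⟩
      · have hxd : (x.den : ℤ) ≠ 0 := by exact_mod_cast x.den_nz
        have hyd : (y.den : ℤ) ≠ 0 := by exact_mod_cast y.den_nz
        have hyn : y.num ≠ 0 := Rat.num_ne_zero.mpr hy
        exact mul_ne_zero two_ne_zero (mul_ne_zero (mul_ne_zero (pow_ne_zero 2 hxd) hyd) hyn)
      · have : (((x.num * y.den) ^ 2 - m * n * ((x.den : ℤ) * y.den) ^ 2 : ℤ) : ℚ) ^ 2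
            + m * ((2 * ((x.den : ℤ) ^ 2 * y.den * y.num) : ℤ) : ℚ) ^ 2
            = (((x.num * y.den) ^ 2 + 2 * m * ((x.den : ℤ) * y.den) * (x.num * y.den)
              + m * n * ((x.den : ℤ) * y.den) ^ 2 : ℤ) : ℚ) ^ 2 := by
          push_cast
          rw [hxnum, hynum]
          linear_combination (4 * (m : ℚ) * ((x.den : ℚ) * (y.den : ℚ)) ^ 4) * heq
        exact_mod_cast this
      · have : (((x.num * y.den) ^ 2 - m * n * ((x.den : ℤ) * y.den) ^ 2 : ℤ) : ℚ) ^ 2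
            + n * ((2 * ((x.den : ℤ) ^ 2 * y.den * y.num) : ℤ) : ℚ) ^ 2
            = (((x.num * y.den) ^ 2 + 2 * n * ((x.den : ℤ) * y.den) * (x.num * y.den)
              + m * n * ((x.den : ℤ) * y.den) ^ 2 : ℤ) : ℚ) ^ 2 := by
          push_cast
          rw [hxnum, hynum]
          linear_combination (4 * (n : ℚ) * ((x.den : ℚ) * (y.den : ℚ)) ^ 4) * heq
        exact_mod_cast this
end

section
/- The points (3, 6), (3, −6), (−1, 2), (−1, −2) on the elliptic curve y² = x(x−1)(x+3) are points of order exactly 4. -/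
/-- The elliptic curve `y² = x(x − 1)(x + 3)`, i.e. `E(−1, 3)`, over `ℚ`. -/
def Em13 : WeierstrassCurve.Affine ℚ where
  a₁ := 0
  a₂ := 2
  a₃ := 0
  a₄ := -3
  a₆ := 0

open WeierstrassCurve.Affine

lemma Em13_ns (x y : ℚ) (he : y ^ 2 = x ^ 3 + 2 * x ^ 2 - 3 * x)
    (hns : y ≠ 0 ∨ 3 * x ^ 2 + 4 * x - 3 ≠ 0) : Em13.Nonsingular x y := by
  rw [WeierstrassCurve.Affine.nonsingular_iff, WeierstrassCurve.Affine.equation_iff]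
  simp only [Em13]
  refine ⟨by linear_combination he, ?_⟩
  rcases hns with h | h
  · right; intro hc; apply h; linarith
  · left; intro hc; apply h; linarith

lemma hQns : Em13.Nonsingular 1 0 := Em13_ns 1 0 (by norm_num) (by norm_num)

lemma order_four {x y : ℚ} (h : Em13.Nonsingular x y)
    (h2 : Point.some _ _ h + Point.some _ _ h = Point.some _ _ hQns) : addOrderOf (Point.some _ _ h) = 4 := by
  have h4 : (4 : ℕ) • Point.some _ _ h = 0 := by
    have : (4 : ℕ) • Point.some _ _ h = (Point.some _ _ h + Point.some _ _ h) + (Point.some _ _ h + Point.some _ _ h) := by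
      abel
    rw [this, h2]
    exact Point.add_of_Y_eq rfl (by show (0:ℚ) = -0 - Em13.a₁ * 1 - Em13.a₃; simp [Em13])
  have h2ne : (2 : ℕ) • Point.some _ _ h ≠ 0 := by
    rw [two_nsmul, h2]; exact Point.some_ne_zero _
  haveI : Fact (Nat.Prime 2) := ⟨Nat.prime_two⟩
  have := addOrderOf_eq_prime_pow (p := 2) (n := 1) (x := Point.some _ _ h)
    (by simpa using h2ne) (by show (2 ^ 2 : ℕ) • _ = 0; norm_num [h4])
  simpa using this

lemma some_congr {x₁ y₁ x₂ y₂ : ℚ} (h₁ : Em13.Nonsingular x₁ y₁) (h₂ : Em13.Nonsingular x₂ y₂)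
    (hx : x₁ = x₂) (hy : y₁ = y₂) : Point.some _ _ h₁ = Point.some _ _ h₂ := by
  subst hx; subst hy; rfl

/-- The points `(3, ±6)` and `(−1, ±2)` lie on `y² = x(x − 1)(x + 3)` and have order
exactly 4 in the Mordell–Weil group. -/
theorem points_of_order_four_on_Em13 :
    (∃ h : Em13.Nonsingular 3 6, addOrderOf (WeierstrassCurve.Affine.Point.some _ _ h) = 4) ∧
    (∃ h : Em13.Nonsingular 3 (-6), addOrderOf (WeierstrassCurve.Affine.Point.some _ _ h) = 4) ∧
    (∃ h : Em13.Nonsingular (-1) 2, addOrderOf (WeierstrassCurve.Affine.Point.some _ _ h) = 4) ∧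
    (∃ h : Em13.Nonsingular (-1) (-2), addOrderOf (WeierstrassCurve.Affine.Point.some _ _ h) = 4) := by
  have H1 : Em13.Nonsingular 3 6 := Em13_ns 3 6 (by norm_num) (by norm_num)
  have H2 : Em13.Nonsingular 3 (-6) := Em13_ns 3 (-6) (by norm_num) (by norm_num)
  have H3 : Em13.Nonsingular (-1) 2 := Em13_ns (-1) 2 (by norm_num) (by norm_num)
  have H4 : Em13.Nonsingular (-1) (-2) := Em13_ns (-1) (-2) (by norm_num) (by norm_num)
  refine ⟨⟨H1, order_four H1 ?_⟩, ⟨H2, order_four H2 ?_⟩, ⟨H3, order_four H3 ?_⟩,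
    ⟨H4, order_four H4 ?_⟩⟩ <;>
  · rw [Point.add_self_of_Y_ne (by norm_num [Em13, WeierstrassCurve.Affine.negY])]
    apply some_congr <;>
      rw [slope_of_Y_ne rfl (by norm_num [Em13, WeierstrassCurve.Affine.negY])] <;>
      norm_num [Em13, WeierstrassCurve.Affine.addX, WeierstrassCurve.Affine.addY,
        WeierstrassCurve.Affine.negAddY, WeierstrassCurve.Affine.negY]
end

section
/- Let m, n be nonzero distinct integers such that −m = u² and n − m = v² for positive integers u, v. Then the four points (u² − uv, ±v(u² − uv)) and (u² + uv, ±v(u² + uv)) are points of order 4 on the elliptic curve y² = x(x+m)(x+n). -/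
open WeierstrassCurve.Affine WeierstrassCurve.Affine.Point in
lemma aux (m n : ℤ) (a b x y : ℚ) (hb : b ≠ 0) (hx : x ≠ 0)
    (hma : (m : ℚ) = -a ^ 2) (hnb : (n : ℚ) = b ^ 2 - a ^ 2)
    (hX : (x - a ^ 2) ^ 2 = a ^ 2 * b ^ 2) (hy : y ^ 2 = b ^ 2 * x ^ 2) :
    ∃ h : (E m n).Nonsingular x y, addOrderOf (WeierstrassCurve.Affine.Point.some _ _ h) = 4 := by
  have hy0 : y ≠ 0 := by
    intro h0; apply hx
    have : b ^ 2 * x ^ 2 = 0 := by rw [← hy, h0]; ring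
    rcases mul_eq_zero.mp this with h | h
    · exact absurd (pow_eq_zero_iff (by norm_num) |>.mp h) hb
    · exact pow_eq_zero_iff (by norm_num) |>.mp h
  have hns : (E m n).Nonsingular x y := by
    rw [nonsingular_iff']
    constructor
    · rw [equation_iff]
      simp only [E]
      rw [hma, hnb]
      linear_combination hy - x * hX
    · right
      simp only [E]
      intro h; apply hy0; linarith
  have hy_ne : y ≠ (E m n).negY x y := by
    simp only [negY, E]
    intro h; apply hy0; linarith
  set L := (E m n).slope x x y y with hLdef
  set N : ℚ := 3*x^2 + 2*(b^2 - 2*a^2)*x + (a^4 - a^2*b^2) with hN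
  have hL : L = N / (2 * y) := by
    rw [hLdef, slope_of_Y_ne rfl hy_ne]
    simp only [negY, E]
    rw [hma, hnb]
    rw [div_eq_div_iff (by intro h; apply hy0; linarith) (by
      intro h; apply hy0; linarith)]
    ring
  have hnum : N ^ 3 - 4 * N * y ^ 2 * ((b^2 - 2*a^2) + 3 * x) + 8 * y ^ 4 = 0 := by
    rw [hN]
    linear_combination (8*y^2 + 4*a^2*b^4 - 12*a^4*b^2 + 8*a^6 - 8*x*b^4 + 44*x*a^2*b^2
        - 44*x*a^4 - 28*x^2*b^2 + 72*x^2*a^2 - 36*x^3) * hy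
      + (a^4*b^4 - 2*a^6*b^2 + a^8 - 6*x*a^2*b^4 + 16*x*a^4*b^2 - 10*x*a^6 + 8*x^2*b^4
        - 36*x^2*a^2*b^2 + 36*x^2*a^4 + 18*x^3*b^2 - 54*x^3*a^2 + 27*x^4) * hX
  have key : (E m n).negAddY x x y L = 0 := by
    have h8 : (8 : ℚ) * y ^ 3 ≠ 0 := by positivity
    have expand : (E m n).negAddY x x y L * (8 * y ^ 3) =
        N ^ 3 - 4 * N * y ^ 2 * ((b^2 - 2*a^2) + 3 * x) + 8 * y ^ 4 := by
      rw [negAddY, addX, hL]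
      simp only [E]
      rw [hma, hnb]
      field_simp
      ring
    have := expand.trans hnum
    exact (mul_eq_zero.mp this).resolve_right h8
  have hyeq : (E m n).addY x x y L =
      (E m n).negY ((E m n).addX x x L) ((E m n).addY x x y L) := by
    rw [addY, key]
    simp [negY, E]
  refine ⟨hns, ?_⟩
  have h2 : Point.some _ _ hns + Point.some _ _ hns =
      Point.some _ _ (nonsingular_add hns hns fun hxy => hy_ne hxy.right) := add_self_of_Y_ne hy_ne
  have h4 : Point.some _ _ (nonsingular_add hns hns fun hxy => hy_ne hxy.right)
      + Point.some _ _ (nonsingular_add hns hns fun hxy => hy_ne hxy.right) = 0 := add_self_of_Y_eq hyeq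
  have := Nat.fact_prime_two
  refine addOrderOf_eq_prime_pow (p := 2) (n := 1) ?_ ?_
  · rw [pow_one, two_nsmul, h2]
    exact some_ne_zero _
  · show (2 ^ 2 : ℕ) • Point.some _ _ hns = 0
    have e2 : (2 : ℕ) • Point.some _ _ hns = Point.some _ _ (nonsingular_add hns hns fun hxy => hy_ne hxy.right) := by
      rw [two_nsmul]; exact h2
    rw [show (2 ^ 2 : ℕ) = 2 * 2 from rfl, mul_nsmul, e2, two_nsmul, h4]

/-- If `−m = u²` and `n − m = v²`, then the four points `(u² ± uv, ±v(u² ± uv))` are points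
of order 4 on `y² = x(x + m)(x + n)`. -/
theorem points_of_order_four (m n : ℤ) (hm : m ≠ 0) (hn : n ≠ 0) (hmn : m ≠ n)
    (u v : ℕ) (hu : 0 < u) (hv : 0 < v) (hmu : -m = (u : ℤ) ^ 2) (hnv : n - m = (v : ℤ) ^ 2) :
    (∃ h : (E m n).Nonsingular ((u : ℚ) ^ 2 - u * v) ((v : ℚ) * ((u : ℚ) ^ 2 - u * v)),
      addOrderOf (WeierstrassCurve.Affine.Point.some _ _ h) = 4) ∧
    (∃ h : (E m n).Nonsingular ((u : ℚ) ^ 2 - u * v) (-((v : ℚ) * ((u : ℚ) ^ 2 - u * v))),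
      addOrderOf (WeierstrassCurve.Affine.Point.some _ _ h) = 4) ∧
    (∃ h : (E m n).Nonsingular ((u : ℚ) ^ 2 + u * v) ((v : ℚ) * ((u : ℚ) ^ 2 + u * v)),
      addOrderOf (WeierstrassCurve.Affine.Point.some _ _ h) = 4) ∧
    (∃ h : (E m n).Nonsingular ((u : ℚ) ^ 2 + u * v) (-((v : ℚ) * ((u : ℚ) ^ 2 + u * v))),
      addOrderOf (WeierstrassCurve.Affine.Point.some _ _ h) = 4) := by
  have ha : (0 : ℚ) < (u : ℚ) := by exact_mod_cast hu
  have hbpos : (0 : ℚ) < (v : ℚ) := by exact_mod_cast hv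
  have hb : ((v : ℚ)) ≠ 0 := hbpos.ne'
  have hma : (m : ℚ) = -(u : ℚ) ^ 2 := by
    have : (m : ℤ) = -(u : ℤ) ^ 2 := by linarith
    exact_mod_cast this
  have hnb : (n : ℚ) = (v : ℚ) ^ 2 - (u : ℚ) ^ 2 := by
    have : (n : ℤ) = (v : ℤ) ^ 2 - (u : ℤ) ^ 2 := by linarith
    exact_mod_cast this
  have huv : (u : ℚ) ≠ (v : ℚ) := by
    intro h
    apply hn
    have h' : (u : ℤ) = (v : ℤ) := by exact_mod_cast h
    have : n = (v : ℤ) ^ 2 - (u : ℤ) ^ 2 := by linarith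
    rw [h'] at this
    simpa using this
  have hx1 : (u : ℚ) ^ 2 - u * v ≠ 0 := by
    have e : (u : ℚ) ^ 2 - u * v = u * (u - v) := by ring
    rw [e]
    exact mul_ne_zero ha.ne' (sub_ne_zero.mpr huv)
  have hx2 : (u : ℚ) ^ 2 + u * v ≠ 0 := by positivity
  exact ⟨aux m n u v _ _ hb hx1 hma hnb (by ring) (by ring),
    aux m n u v _ _ hb hx1 hma hnb (by ring) (by ring),
    aux m n u v _ _ hb hx2 hma hnb (by ring) (by ring),
    aux m n u v _ _ hb hx2 hma hnb (by ring) (by ring)⟩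
end

section
/- The elliptic curve y² = x(x+m)(x+n) with m = −pk, n = qk (p, q coprime positive integers, k squarefree positive integer) has a rational point of order 4 if and only if both −m = pk and n − m = (p+q)k are perfect squares. -/
open WeierstrassCurve.Affine WeierstrassCurve.Affine.Point in
/-- Backward direction: if `r = A²` and `r + s = B²`, the curve has a point of order 4. -/
lemma backward_aux {W : WeierstrassCurve.Affine ℚ} {r s A B : ℚ}
    (ha1 : W.a₁ = 0) (ha2 : W.a₂ = s - r) (ha3 : W.a₃ = 0) (ha4 : W.a₄ = -(r * s))
    (ha6 : W.a₆ = 0) (hA : 0 < A) (hB : 0 < B) (hA2 : A ^ 2 = r) (hB2 : B ^ 2 = r + s) :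
    ∃ P : W.Point, addOrderOf P = 4 := by
  have hrA : r = A ^ 2 := hA2.symm
  have hsAB : s = B ^ 2 - A ^ 2 := by rw [hrA] at hB2; linarith
  subst hrA hsAB
  set X : ℚ := A * (A + B) with hX
  set Y : ℚ := A * B * (A + B) with hYdef
  have hY0 : Y ≠ 0 := by have : 0 < Y := by rw [hYdef]; positivity
                         exact this.ne'
  have hEq : W.Equation X Y := by
    rw [equation_iff, ha1, ha2, ha3, ha4, ha6, hX, hYdef]; ring
  have hnegY : W.negY X Y = -Y := by rw [negY, ha1, ha3]; ring
  have hy : Y ≠ W.negY X Y := by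
    rw [hnegY]
    intro hcon
    apply hY0
    linarith
  have hnsP : W.Nonsingular X Y := by
    rw [nonsingular_iff, ha1, ha3]
    exact ⟨hEq, Or.inr (by rw [zero_mul, sub_zero]; intro hcon; apply hY0; linarith)⟩
  have hL : W.slope X X Y Y = A + B := by
    rw [slope_of_Y_ne rfl hy, hnegY, ha1, ha2, ha4]
    rw [hX, hYdef]
    have hA0 : A ≠ 0 := hA.ne'
    have hB0 : B ≠ 0 := hB.ne'
    have hAB : A + B ≠ 0 := by positivity
    field_simp
    ring
  have hx2 : W.addX X X (W.slope X X Y Y) = A ^ 2 := by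
    rw [addX, hL, ha1, ha2, hX]; ring
  have hy2 : W.addY X X Y (W.slope X X Y Y) = 0 := by
    rw [addY, negY, negAddY, ha1, ha3, hx2, hL, hX, hYdef]; ring
  have hyy : W.addY X X Y (W.slope X X Y Y) =
      W.negY (W.addX X X (W.slope X X Y Y)) (W.addY X X Y (W.slope X X Y Y)) := by
    rw [hy2, negY, ha1, ha3]; ring
  have h2Q : Point.some _ _ hnsP + Point.some _ _ hnsP =
      Point.some _ _ (nonsingular_add hnsP hnsP fun hxy => hy hxy.right) := add_self_of_Y_ne hy
  refine ⟨Point.some _ _ hnsP, ?_⟩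
  have h2ne : ¬ (2 : ℕ) ^ 1 • Point.some _ _ hnsP = 0 := by
    rw [pow_one, two_nsmul, h2Q]
    exact some_ne_zero _
  have h2s : (2 : ℕ) • Point.some _ _ hnsP = Point.some _ _ (nonsingular_add hnsP hnsP fun hxy => hy hxy.right) := by
    rw [two_nsmul]; exact h2Q
  have h4eq : (2 : ℕ) ^ (1 + 1) • Point.some _ _ hnsP = 0 := by
    have h22 : (2 : ℕ) ^ (1 + 1) = 2 * 2 := by norm_num
    rw [h22, mul_nsmul, h2s, two_nsmul]
    exact add_self_of_Y_eq hyy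
  have := addOrderOf_eq_prime_pow h2ne h4eq
  rw [this]
  norm_num

open WeierstrassCurve.Affine WeierstrassCurve.Affine.Point in
/-- Forward direction: a point of order 4 forces `r` and `r + s` to be squares. -/
lemma forward_aux {W : WeierstrassCurve.Affine ℚ} {r s : ℚ}
    (ha1 : W.a₁ = 0) (ha2 : W.a₂ = s - r) (ha3 : W.a₃ = 0) (ha4 : W.a₄ = -(r * s))
    (ha6 : W.a₆ = 0) (hr : 0 < r) (hs : 0 < s)
    (P : W.Point) (hP : addOrderOf P = 4) : IsSquare r ∧ IsSquare (r + s) := by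
  rcases P with _ | @⟨x, y, h⟩
  · rw [show (zero : W.Point) = 0 from rfl, addOrderOf_zero] at hP
    exact absurd hP (by norm_num)
  · have h4 : (4 : ℕ) • (Point.some _ _ h) = 0 := by
      rw [← hP]; exact addOrderOf_nsmul_eq_zero _
    have hneg : W.negY x y = -y := by rw [negY, ha1, ha3]; ring
    have hy : y ≠ W.negY x y := by
      intro hEqy
      have h2 : (2 : ℕ) • (Point.some _ _ h) = 0 := by
        rw [two_nsmul]; exact add_self_of_Y_eq hEqy
      have hdvd := addOrderOf_dvd_of_nsmul_eq_zero h2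
      rw [hP] at hdvd
      norm_num at hdvd
    have hy0 : y ≠ 0 := by
      intro h0; apply hy; rw [hneg, h0]; norm_num
    have h2y : (2 : ℚ) * y ≠ 0 := mul_ne_zero two_ne_zero hy0
    set L := W.slope x x y y with hLdef
    have hL2 : L * (2 * y) = 3 * x ^ 2 + 2 * (s - r) * x - r * s := by
      rw [hLdef, slope_of_Y_ne rfl hy, hneg, ha1, ha2, ha4]
      field_simp [hy0]
      ring
    have h' : W.Nonsingular (W.addX x x L) (W.addY x x y L) :=
      nonsingular_add h h fun hxy => hy hxy.right
    have hadd : Point.some _ _ h + Point.some _ _ h = Point.some _ _ h' := add_self_of_Y_ne hy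
    have h2s : (2 : ℕ) • Point.some _ _ h = Point.some _ _ h' := by
      rw [two_nsmul]; exact hadd
    have h4' : Point.some _ _ h' + Point.some _ _ h' = 0 := by
      have h40 : (2 : ℕ) • ((2 : ℕ) • (Point.some _ _ h)) = 0 := by
        rw [← mul_nsmul]; exact h4
      rwa [h2s, two_nsmul] at h40
    have hyy : W.addY x x y L = W.negY (W.addX x x L) (W.addY x x y L) := by
      by_contra hne
      exact some_ne_zero _ ((add_self_of_Y_ne hne) ▸ h4')
    have hy2 : W.addY x x y L = 0 := by
      rw [negY, ha1, ha3] at hyy; linarith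
    have heqx : W.addX x x L * (W.addX x x L - r) * (W.addX x x L + s) = 0 := by
      have hE2 := h'.1
      rw [equation_iff, ha1, ha2, ha3, ha4, ha6, hy2] at hE2
      linear_combination -hE2
    have heqy : y ^ 2 = x ^ 3 + (s - r) * x ^ 2 - r * s * x := by
      have hE1 := h.1
      rw [equation_iff, ha1, ha2, ha3, ha4, ha6] at hE1
      linear_combination hE1
    have hx2eq : W.addX x x L = L ^ 2 - (s - r) - 2 * x := by
      rw [addX, ha1, ha2]; ring
    have hK0 : (W.addX x x L - 0) * (2 * y) ^ 2 = (x ^ 2 + r * s) ^ 2 := by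
      rw [hx2eq]
      linear_combination (2 * y * L + (3 * x ^ 2 + 2 * (s - r) * x - r * s)) * hL2 -
        (4 * ((s - r) + 2 * x + 0)) * heqy
    have hKr : (W.addX x x L - r) * (2 * y) ^ 2 = ((x - r) ^ 2 - r * (r + s)) ^ 2 := by
      rw [hx2eq]
      linear_combination (2 * y * L + (3 * x ^ 2 + 2 * (s - r) * x - r * s)) * hL2 -
        (4 * ((s - r) + 2 * x + r)) * heqy
    have hKs : (W.addX x x L + s) * (2 * y) ^ 2 = ((x + s) ^ 2 - s * (s + r)) ^ 2 := by
      rw [hx2eq]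
      linear_combination (2 * y * L + (3 * x ^ 2 + 2 * (s - r) * x - r * s)) * hL2 -
        (4 * ((s - r) + 2 * x + -s)) * heqy
    have hysq : 0 < (2 * y) ^ 2 := by positivity
    rcases mul_eq_zero.mp heqx with h12 | hcase3
    · rcases mul_eq_zero.mp h12 with hcase1 | hcase2
      · exfalso
        rw [hcase1] at hKr
        nlinarith [sq_nonneg ((x - r) ^ 2 - r * (r + s))]
      · have hX2r : W.addX x x L = r := by linarith [sub_eq_zero.mp hcase2]
        rw [hX2r] at hK0 hKs
        constructor
        · refine ⟨(x ^ 2 + r * s) / (2 * y), ?_⟩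
          rw [div_mul_div_comm, eq_div_iff (mul_ne_zero h2y h2y)]
          linear_combination hK0
        · refine ⟨((x + s) ^ 2 - s * (s + r)) / (2 * y), ?_⟩
          rw [div_mul_div_comm, eq_div_iff (mul_ne_zero h2y h2y)]
          linear_combination hKs
    · exfalso
      have hX2s : W.addX x x L = -s := by linarith [eq_neg_of_add_eq_zero_left hcase3]
      rw [hX2s] at hK0
      nlinarith [sq_nonneg (x ^ 2 + r * s)]

/-- With `m = −pk`, `n = qk` (`p, q` coprime, `k` squarefree), the curve
`y² = x(x + m)(x + n)` has a rational point of order 4 iff `−m = pk` and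
`n − m = (p + q)k` are perfect squares. -/
theorem exists_point_of_order_four_iff (p q k : ℕ) (hp : 0 < p) (hq : 0 < q) (hk : 0 < k)
    (hpq : Nat.Coprime p q) (hsqf : Squarefree k) :
    (∃ P : (E (-(p * k : ℤ)) ((q * k : ℕ) : ℤ)).Point, addOrderOf P = 4) ↔
      IsSquare (p * k) ∧ IsSquare ((p + q) * k) := by
  set r : ℚ := (p : ℚ) * k with hrdef
  set s : ℚ := (q : ℚ) * k with hsdef
  set W := E (-(p * k : ℤ)) ((q * k : ℕ) : ℤ) with hWdef
  have ha1 : W.a₁ = 0 := rfl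
  have ha3 : W.a₃ = 0 := rfl
  have ha6 : W.a₆ = 0 := rfl
  have ha2 : W.a₂ = s - r := by
    show ((-(p * k : ℤ) : ℤ) : ℚ) + (((q * k : ℕ) : ℤ) : ℚ) = s - r
    push_cast
    ring
  have ha4 : W.a₄ = -(r * s) := by
    show ((-(p * k : ℤ) : ℤ) : ℚ) * (((q * k : ℕ) : ℤ) : ℚ) = -(r * s)
    push_cast
    ring
  have hr : 0 < r := by
    rw [hrdef]; positivity
  have hs : 0 < s := by
    rw [hsdef]; positivity
  constructor
  · rintro ⟨P, hP⟩
    obtain ⟨hsq1, hsq2⟩ := forward_aux ha1 ha2 ha3 ha4 ha6 hr hs P hP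
    constructor
    · rw [← Rat.isSquare_natCast_iff]
      convert hsq1 using 1
      push_cast
      ring
    · rw [← Rat.isSquare_natCast_iff]
      convert hsq2 using 1
      push_cast
      ring
  · rintro ⟨⟨a, ha⟩, ⟨b, hb⟩⟩
    have ha0 : 0 < a := by
      rcases Nat.eq_zero_or_pos a with h0 | h0
      · rw [h0] at ha; simp at ha; omega
      · exact h0
    have hb0 : 0 < b := by
      rcases Nat.eq_zero_or_pos b with h0 | h0
      · rw [h0] at hb; simp at hb
        rcases hb with hb | hb <;> omega
      · exact h0
    have hA2 : ((a : ℚ)) ^ 2 = r := by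
      rw [hrdef]
      have hcast : ((p * k : ℕ) : ℚ) = ((a * a : ℕ) : ℚ) := Nat.cast_inj.mpr ha
      push_cast at hcast
      push_cast
      linear_combination -hcast
    have hB2 : ((b : ℚ)) ^ 2 = r + s := by
      rw [hrdef, hsdef]
      have hcast : (((p + q) * k : ℕ) : ℚ) = ((b * b : ℕ) : ℚ) := Nat.cast_inj.mpr hb
      push_cast at hcast
      push_cast
      linear_combination -hcast
    exact backward_aux ha1 ha2 ha3 ha4 ha6 (by exact_mod_cast ha0) (by exact_mod_cast hb0) hA2 hB2
end

section
/- Let a, b be coprime nonzero integers with a+2b ≠ 0, 2a+b ≠ 0, a+b ≠ 0, and set m = a³(a+2b), n = b³(b+2a). Then the points (a²b², ±a²b²(a+b)²) are points of order 3 on the elliptic curve y² = x(x+m)(x+n). -/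
open WeierstrassCurve.Affine

lemma some_eq_some' {W : WeierstrassCurve.Affine ℚ} {x₁ y₁ x₂ y₂ : ℚ}
    (h₁ : W.Nonsingular x₁ y₁) (h₂ : W.Nonsingular x₂ y₂) (hx : x₁ = x₂) (hy : y₁ = y₂) :
    Point.some _ _ h₁ = Point.some _ _ h₂ := by subst hx; subst hy; rfl

lemma order_three_aux {W : WeierstrassCurve.Affine ℚ} {x y : ℚ} (h : W.Nonsingular x y)
    (hy : y ≠ W.negY x y) (hX : W.addX x x (W.slope x x y y) = x) :
    addOrderOf (Point.some _ _ h) = 3 := by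
  have hY : W.negAddY x x y (W.slope x x y y) = y := by
    rw [WeierstrassCurve.Affine.negAddY, hX, sub_self, mul_zero, zero_add]
  have key : Point.some _ _ h + Point.some _ _ h = -Point.some _ _ h := by
    rw [Point.add_self_of_Y_ne' hy]
    exact congrArg Neg.neg (some_eq_some' _ _ hX hY)
  have h3 : (3 : ℕ) • Point.some _ _ h = 0 := by
    rw [show (3:ℕ) = 2 + 1 from rfl, add_nsmul, two_nsmul, one_nsmul, key, neg_add_cancel]
  haveI : Fact (Nat.Prime 3) := ⟨by norm_num⟩
  exact addOrderOf_eq_prime h3 (Point.some_ne_zero h)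

/-- For coprime nonzero `a, b` with `a + 2b ≠ 0`, `2a + b ≠ 0`, `a + b ≠ 0`, and
`m = a³(a + 2b)`, `n = b³(b + 2a)`, the points `(a²b², ±a²b²(a + b)²)` have order 3
on `y² = x(x + m)(x + n)`. -/
theorem points_of_order_three (a b : ℤ) (ha : a ≠ 0) (hb : b ≠ 0) (hab : IsCoprime a b)
    (h1 : a + 2 * b ≠ 0) (h2 : 2 * a + b ≠ 0) (h3 : a + b ≠ 0)
    (m n : ℤ) (hm : m = a ^ 3 * (a + 2 * b)) (hn : n = b ^ 3 * (b + 2 * a)) :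
    (∃ h : (E m n).Nonsingular ((a : ℚ) ^ 2 * b ^ 2) ((a : ℚ) ^ 2 * b ^ 2 * ((a : ℚ) + b) ^ 2),
      addOrderOf (WeierstrassCurve.Affine.Point.some _ _ h) = 3) ∧
    (∃ h : (E m n).Nonsingular ((a : ℚ) ^ 2 * b ^ 2)
        (-((a : ℚ) ^ 2 * b ^ 2 * ((a : ℚ) + b) ^ 2)),
      addOrderOf (WeierstrassCurve.Affine.Point.some _ _ h) = 3) := by
  subst hm hn
  have ha' : (a : ℚ) ≠ 0 := Int.cast_ne_zero.mpr ha
  have hb' : (b : ℚ) ≠ 0 := Int.cast_ne_zero.mpr hb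
  have h3' : (a : ℚ) + b ≠ 0 := by
    have := Int.cast_ne_zero (α := ℚ).mpr h3; push_cast at this; convert this using 2
  have hy0 : (a : ℚ) ^ 2 * b ^ 2 * ((a : ℚ) + b) ^ 2 ≠ 0 := by positivity
  set x : ℚ := (a : ℚ) ^ 2 * b ^ 2 with hxdef
  set y : ℚ := (a : ℚ) ^ 2 * b ^ 2 * ((a : ℚ) + b) ^ 2 with hydef
  set W := E (a ^ 3 * (a + 2 * b)) (b ^ 3 * (b + 2 * a)) with hW
  have hEq : W.Equation x y := by
    rw [equation_iff]
    show y ^ 2 + 0 * x * y + 0 * y =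
      x ^ 3 + (((a ^ 3 * (a + 2 * b) : ℤ) : ℚ) + ((b ^ 3 * (b + 2 * a) : ℤ) : ℚ)) * x ^ 2 +
        ((a ^ 3 * (a + 2 * b) : ℤ) : ℚ) * ((b ^ 3 * (b + 2 * a) : ℤ) : ℚ) * x + 0
    push_cast
    rw [hxdef, hydef]; ring
  have hEq' : W.Equation x (-y) := by
    rw [equation_iff] at hEq ⊢
    show (-y) ^ 2 + W.a₁ * x * (-y) + W.a₃ * (-y) = _
    have h1 : W.a₁ = 0 := rfl
    have h3 : W.a₃ = 0 := rfl
    rw [h1, h3] at hEq ⊢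
    linear_combination hEq
  have hnegY : ∀ y' : ℚ, W.negY x y' = -y' := by
    intro y'; rw [negY]; show -y' - 0 * x - 0 = -y'; ring
  have hns : W.Nonsingular x y := by
    rw [nonsingular_iff]
    refine ⟨hEq, Or.inr ?_⟩
    show y ≠ -y - 0 * x - 0
    intro h; apply hy0; rw [hydef] at h ⊢; linarith [h]
  have hns' : W.Nonsingular x (-y) := by
    rw [nonsingular_iff]
    refine ⟨hEq', Or.inr ?_⟩
    show -y ≠ -(-y) - 0 * x - 0
    intro h; apply hy0; rw [hydef] at h ⊢; linarith [h]
  have hy1 : y ≠ W.negY x y := by rw [hnegY]; intro h; exact hy0 (by linarith)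
  have hy2 : -y ≠ W.negY x (-y) := by rw [hnegY, neg_neg]; intro h; exact hy0 (by linarith)
  have ha2 : W.a₂ = ((a ^ 3 * (a + 2 * b) : ℤ) : ℚ) + ((b ^ 3 * (b + 2 * a) : ℤ) : ℚ) := rfl
  have ha4 : W.a₄ = ((a ^ 3 * (a + 2 * b) : ℤ) : ℚ) * ((b ^ 3 * (b + 2 * a) : ℤ) : ℚ) := rfl
  have ha1 : W.a₁ = 0 := rfl
  have hX1 : W.addX x x (W.slope x x y y) = x := by
    rw [slope_of_Y_ne rfl hy1, addX, hnegY, ha1, ha2, ha4]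
    push_cast
    rw [hxdef, hydef]
    field_simp
    ring
  have hslope : W.slope x x (-y) (-y) = - W.slope x x y y := by
    rw [slope_of_Y_ne rfl hy1, slope_of_Y_ne rfl hy2, hnegY, hnegY, neg_neg, ha1]
    rw [show -y - y = -(y - -y) by ring, div_neg, zero_mul, sub_zero]
    norm_num
  have hX2 : W.addX x x (W.slope x x (-y) (-y)) = x := by
    rw [addX, hslope, ha1]
    rw [addX, ha1] at hX1
    linear_combination hX1
  exact ⟨⟨hns, order_three_aux hns hy1 hX1⟩, ⟨hns', order_three_aux hns' hy2 hX2⟩⟩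
end

section
/- Let p, q be coprime positive integers and k a squarefree positive integer, and suppose there exist coprime nonzero integers a, b with a+2b ≠ 0, 2a+b ≠ 0, a ± b ≠ 0 such that −pk = a³(a+2b) and qk = b³(2a+b). Then k = 1 or k = 3. -/
/-- If `p, q` are coprime positive integers, `k` is squarefree positive, and there are
coprime nonzero integers `a, b` with `a + 2b ≠ 0`, `2a + b ≠ 0`, `a ± b ≠ 0` such that
`−pk = a³(a + 2b)` and `qk = b³(2a + b)`, then `k = 1` or `k = 3`. -/
theorem k_eq_one_or_three_of_three_torsion (p q k : ℕ) (hp : 0 < p) (hq : 0 < q)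
    (hk : 0 < k) (hpq : Nat.Coprime p q) (hsqf : Squarefree k)
    (a b : ℤ) (ha : a ≠ 0) (hb : b ≠ 0) (hab : IsCoprime a b)
    (h1 : a + 2 * b ≠ 0) (h2 : 2 * a + b ≠ 0) (h3 : a + b ≠ 0) (h4 : a - b ≠ 0)
    (hm : -((p : ℤ) * k) = a ^ 3 * (a + 2 * b)) (hn : (q : ℤ) * k = b ^ 3 * (2 * a + b)) :
    k = 1 ∨ k = 3 := by
  have key : ∀ r : ℕ, r.Prime → r ∣ k → r = 3 := by
    intro r hr hrk
    have hrz : Prime (r : ℤ) := by rw [Int.prime_iff_natAbs_prime]; simpa using hr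
    have hdk : (r : ℤ) ∣ (k : ℤ) := Int.natCast_dvd_natCast.mpr hrk
    have hd1 : (r : ℤ) ∣ a ^ 3 * (a + 2 * b) := by
      rw [← hm]; exact dvd_neg.mpr (Dvd.dvd.mul_left hdk _)
    have hd2 : (r : ℤ) ∣ b ^ 3 * (2 * a + b) := by
      rw [← hn]; exact Dvd.dvd.mul_left hdk _
    have hna : ¬ (r : ℤ) ∣ a := by
      intro hda
      have hsum : (r : ℤ) ∣ 2 * a + b := by
        rcases hrz.dvd_mul.mp hd2 with h | h
        · exact absurd (hab.isUnit_of_dvd' hda (hrz.dvd_of_dvd_pow h)) hrz.not_unit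
        · exact h
      have hdb : (r : ℤ) ∣ b := by
        have := dvd_sub hsum (Dvd.dvd.mul_left hda 2)
        simpa using this
      exact hrz.not_unit (hab.isUnit_of_dvd' hda hdb)
    have hnb : ¬ (r : ℤ) ∣ b := by
      intro hdb
      have hsum : (r : ℤ) ∣ a + 2 * b := by
        rcases hrz.dvd_mul.mp hd1 with h | h
        · exact absurd (hrz.dvd_of_dvd_pow h) hna
        · exact h
      have : (r : ℤ) ∣ a := by
        have := dvd_sub hsum (Dvd.dvd.mul_left hdb 2)
        simpa using this
      exact hna this
    have hda2 : (r : ℤ) ∣ a + 2 * b := by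
      rcases hrz.dvd_mul.mp hd1 with h | h
      · exact absurd (hrz.dvd_of_dvd_pow h) hna
      · exact h
    have hdb2 : (r : ℤ) ∣ 2 * a + b := by
      rcases hrz.dvd_mul.mp hd2 with h | h
      · exact absurd (hrz.dvd_of_dvd_pow h) hnb
      · exact h
    have h3b : (r : ℤ) ∣ 3 * b := by
      have h := dvd_sub (Dvd.dvd.mul_left hda2 2) hdb2
      have e : 2 * (a + 2 * b) - (2 * a + b) = 3 * b := by ring
      rwa [e] at h
    have hr3 : (r : ℤ) ∣ 3 := (hrz.dvd_mul.mp h3b).resolve_right hnb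
    have hr3' : r ∣ 3 := by exact_mod_cast hr3
    exact (Nat.prime_dvd_prime_iff_eq hr Nat.prime_three).mp hr3'
  have hsub : k.primeFactors ⊆ {3} := by
    intro r hr
    rw [Nat.mem_primeFactors] at hr
    simp [key r hr.1 hr.2.1]
  have hk3 : k ∣ 3 := by
    have hprod := Nat.prod_primeFactors_of_squarefree hsqf
    calc k = ∏ r ∈ k.primeFactors, r := hprod.symm
      _ ∣ ∏ r ∈ ({3} : Finset ℕ), r :=
        Finset.prod_dvd_prod_of_subset _ _ _ hsub
      _ = 3 := by simp
  exact (Nat.dvd_prime Nat.prime_three).mp hk3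
end

section
/- If t is a prime dividing both a³(a+2b) and b³(2a+b), where a, b are coprime nonzero integers, then t = 3. -/
/-- If a prime `t` divides both `a³(a + 2b)` and `b³(2a + b)` for coprime nonzero
integers `a, b`, then `t = 3`. -/
theorem prime_dvd_both_eq_three (a b : ℤ) (ha : a ≠ 0) (hb : b ≠ 0) (hab : IsCoprime a b)
    (t : ℕ) (ht : t.Prime)
    (h1 : (t : ℤ) ∣ a ^ 3 * (a + 2 * b)) (h2 : (t : ℤ) ∣ b ^ 3 * (2 * a + b)) : t = 3 := by
  have htz : Prime (t : ℤ) := Int.prime_iff_natAbs_prime.mpr (by simpa using ht)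
  -- t does not divide both a and b
  have hnot : ¬ ((t : ℤ) ∣ a ∧ (t : ℤ) ∣ b) := by
    rintro ⟨hta, htb⟩
    exact htz.not_unit (hab.isUnit_of_dvd' hta htb)
  -- t ∣ a + 2b
  have hd1 : (t : ℤ) ∣ a + 2 * b := by
    rcases htz.dvd_mul.mp h1 with h | h
    · replace h := htz.dvd_of_dvd_pow h
      -- t ∣ a; then from h2, t ∤ b so t ∣ 2a+b, so t ∣ b, contradiction
      rcases htz.dvd_mul.mp h2 with h' | h'
      · exact absurd ⟨h, htz.dvd_of_dvd_pow h'⟩ hnot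
      · have : (t : ℤ) ∣ b := by
          have := dvd_sub h' (Dvd.dvd.mul_left h 2)
          simpa using this
        exact absurd ⟨h, this⟩ hnot
    · exact h
  -- t ∣ 2a + b
  have hd2 : (t : ℤ) ∣ 2 * a + b := by
    rcases htz.dvd_mul.mp h2 with h | h
    · replace h := htz.dvd_of_dvd_pow h
      have : (t : ℤ) ∣ a := by
        have := dvd_sub hd1 (Dvd.dvd.mul_left h 2)
        simpa using this
      exact absurd ⟨this, h⟩ hnot
    · exact h
  -- t ∣ 3b
  have h3b : (t : ℤ) ∣ 3 * b := by
    have := dvd_sub (Dvd.dvd.mul_left hd1 2) hd2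
    have e : 2 * (a + 2 * b) - (2 * a + b) = 3 * b := by ring
    rwa [e] at this
  rcases htz.dvd_mul.mp h3b with h | h
  · have h3 : t ∣ 3 := by exact_mod_cast h
    exact (Nat.prime_dvd_prime_iff_eq ht (by norm_num)).mp h3
  · -- t ∣ b, then t ∣ a from hd1, contradiction
    have ha' : (t : ℤ) ∣ a := by
      have := dvd_sub hd1 (Dvd.dvd.mul_left h 2)
      simpa using this
    exact absurd ⟨ha', h⟩ hnot
end

section
/- Let sin(θ/2) = ϱ/σ with ϱ, σ coprime positive integers and σ odd, and write cos θ = (σ² − 2ϱ²)/σ² = r/s in lowest terms (r, s both odd). Then the isosceles triangle with sides a = 2σ, a = 2σ, c = 4ϱ and included angle θ has area 2√(s² − r²); i.e., k = 2 is realized as a θ-congruent number by this triangle. -/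
/-- If `sin(θ/2) = ϱ/σ` with `ϱ, σ` coprime positive integers and `σ` odd, and
`cos θ = r/s` in lowest terms with `s > 0`, then `r` and `s` are both odd and the
isosceles triangle with sides `2σ, 2σ, 4ϱ` and included angle `θ` has area
`2√(s² − r²)`; i.e. `k = 2` is realized as a `θ`-congruent number by this triangle. -/
theorem isosceles_triangle_area_sigma_odd (θ : ℝ) (hθ : θ ∈ Set.Ioo 0 Real.pi)
    (ϱ σ : ℕ) (hϱ : 0 < ϱ) (hσ : 0 < σ) (hcop : Nat.Coprime ϱ σ) (hodd : Odd σ)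
    (hsin : Real.sin (θ / 2) = (ϱ : ℝ) / σ)
    (r s : ℤ) (hs : 0 < s) (hrs : IsCoprime r s) (hcos : Real.cos θ = (r : ℝ) / s) :
    Odd r ∧ Odd s ∧
      (r : ℝ) / s = ((σ : ℝ) ^ 2 - 2 * (ϱ : ℝ) ^ 2) / (σ : ℝ) ^ 2 ∧
      ((2 * (σ : ℝ)) ^ 2 / 2) * Real.sin θ =
        2 * Real.sqrt ((s : ℝ) ^ 2 - (r : ℝ) ^ 2) := by
  obtain ⟨hθ0, hθπ⟩ := hθ
  have hσR : (0:ℝ) < σ := by exact_mod_cast hσ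
  have hσne : (σ:ℝ) ≠ 0 := ne_of_gt hσR
  have hsne : (s:ℝ) ≠ 0 := by exact_mod_cast hs.ne'
  -- cos θ in terms of sin(θ/2)
  have hcos2 : Real.cos θ = 1 - 2 * Real.sin (θ/2)^2 := by
    have h := Real.cos_two_mul (θ/2)
    have h2 : 2 * (θ/2) = θ := by ring
    rw [h2] at h
    rw [h, Real.cos_sq']
    ring
  have hcosval : Real.cos θ = ((σ:ℝ)^2 - 2*(ϱ:ℝ)^2) / (σ:ℝ)^2 := by
    rw [hcos2, hsin]
    field_simp
  -- coprimality of σ² - 2ϱ² and σ²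
  have hcopZ : IsCoprime (ϱ:ℤ) (σ:ℤ) := by
    rw [Int.isCoprime_iff_gcd_eq_one, Int.gcd_natCast_natCast]
    exact hcop
  have h2σ : IsCoprime (2:ℤ) (σ:ℤ) := by
    rw [Int.isCoprime_iff_gcd_eq_one]
    have h1 : Nat.Coprime 2 σ := Nat.coprime_two_left.mpr hodd
    rw [show ((2:ℤ)) = ((2:ℕ):ℤ) from rfl, Int.gcd_natCast_natCast]
    exact h1
  have hcp : IsCoprime ((σ:ℤ)^2 - 2*(ϱ:ℤ)^2) ((σ:ℤ)^2) := by
    have h1 : IsCoprime ((2:ℤ)*(ϱ:ℤ)^2) ((σ:ℤ)^2) :=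
      (h2σ.pow_right).mul_left (hcopZ.pow)
    have h2 := (h1.neg_left).add_mul_left_left 1
    have h3 : -(2*(ϱ:ℤ)^2) + (σ:ℤ)^2 * 1 = (σ:ℤ)^2 - 2*(ϱ:ℤ)^2 := by ring
    rwa [h3] at h2
  -- cross multiplication
  have hσ2ne : ((σ:ℝ))^2 ≠ 0 := pow_ne_zero 2 hσne
  have hcrossR : (r:ℝ) * (σ:ℝ)^2 = ((σ:ℝ)^2 - 2*(ϱ:ℝ)^2) * s := by
    have h := hcos.symm.trans hcosval
    rw [div_eq_div_iff hsne hσ2ne] at h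
    exact h
  have hcross : r * (σ:ℤ)^2 = ((σ:ℤ)^2 - 2*(ϱ:ℤ)^2) * s := by
    exact_mod_cast hcrossR
  -- s = σ² and r = σ² - 2ϱ²
  have hsd : s ∣ (σ:ℤ)^2 := by
    have : s ∣ r * (σ:ℤ)^2 := hcross ▸ Dvd.intro_left _ rfl
    exact (hrs.symm).dvd_of_dvd_mul_left this
  have hσd : (σ:ℤ)^2 ∣ s := by
    have : (σ:ℤ)^2 ∣ ((σ:ℤ)^2 - 2*(ϱ:ℤ)^2) * s := hcross ▸ Dvd.intro_left _ rfl
    exact hcp.symm.dvd_of_dvd_mul_left this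
  have hseq : s = (σ:ℤ)^2 := by
    have hσ2pos : (0:ℤ) < (σ:ℤ)^2 := by positivity
    exact Int.dvd_antisymm hs.le hσ2pos.le hsd hσd
  have hreq : r = (σ:ℤ)^2 - 2*(ϱ:ℤ)^2 := by
    have := hcross
    rw [hseq] at this
    exact mul_right_cancel₀ (by positivity) this
  -- parity
  have hoddσZ : Odd ((σ:ℤ)) := by exact_mod_cast hodd
  have hodds : Odd s := hseq ▸ hoddσZ.pow
  have hoddr : Odd r := by
    rw [hreq]
    exact (hoddσZ.pow).sub_even (even_two_mul ((ϱ:ℤ)^2))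
  -- ϱ < σ
  have hθhalf : θ/2 ∈ Set.Ioo 0 (Real.pi/2) := ⟨by linarith, by linarith⟩
  have hsinlt : Real.sin (θ/2) < 1 := by
    have := Real.strictMonoOn_sin (a := θ/2) (b := Real.pi/2)
      ⟨by linarith, by linarith⟩ ⟨by linarith [Real.pi_pos], le_refl _⟩ hθhalf.2
    simpa using this
  have hϱσ : (ϱ:ℝ) < σ := by
    rw [hsin, div_lt_one hσR] at hsinlt
    exact hsinlt
  have hnn : (0:ℝ) ≤ (σ:ℝ)^2 - (ϱ:ℝ)^2 := by nlinarith
  -- cos(θ/2)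
  have hcoshpos : 0 < Real.cos (θ/2) :=
    Real.cos_pos_of_mem_Ioo ⟨by linarith [Real.pi_pos], hθhalf.2⟩
  have hcosh : Real.cos (θ/2) = Real.sqrt ((σ:ℝ)^2 - (ϱ:ℝ)^2) / σ := by
    have hsq : Real.cos (θ/2)^2 = ((σ:ℝ)^2 - (ϱ:ℝ)^2) / (σ:ℝ)^2 := by
      rw [Real.cos_sq', hsin]
      field_simp
    have := Real.sqrt_sq hcoshpos.le
    rw [← this, hsq, Real.sqrt_div hnn, Real.sqrt_sq hσR.le]
  -- area
  have hsinθ : Real.sin θ = 2 * Real.sin (θ/2) * Real.cos (θ/2) := by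
    have h := Real.sin_two_mul (θ/2)
    have h2 : 2 * (θ/2) = θ := by ring
    rwa [h2] at h
  refine ⟨hoddr, hodds, by rw [← hcos, hcosval], ?_⟩
  have hrsval : (s:ℝ)^2 - (r:ℝ)^2 = (2*(ϱ:ℝ))^2 * ((σ:ℝ)^2 - (ϱ:ℝ)^2) := by
    have : (s:ℝ) = (σ:ℝ)^2 := by exact_mod_cast congrArg (Int.cast : ℤ → ℝ) hseq
    have hr : (r:ℝ) = (σ:ℝ)^2 - 2*(ϱ:ℝ)^2 := by exact_mod_cast congrArg (Int.cast : ℤ → ℝ) hreq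
    rw [this, hr]; ring
  rw [hrsval, Real.sqrt_mul (sq_nonneg _), Real.sqrt_sq (by positivity), hsinθ, hsin, hcosh]
  field_simp
end
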